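/- Let X = {[b₁:c₁],...,[b_s:c_s]} ⊂ ℙ¹ be distinct points with all bᵢ ≠ 0 and a₁ ≤ ... ≤ a_s non-negative integers. Then the initial ideal of the power ideal J = ⟨(bᵢx + cᵢy)^{aᵢ+1}⟩ with respect to graded lexicographic order (x > y) is a lex-segment ideal: in each degree d it is spanned by the min{d+1, Σᵢ[d-aᵢ]₊} lex-largest monomials of degree d. -/

import Mathlib

namespace LexSegAux

open Polynomial

/-- The apolarity-style pairing functional. -/
noncomputable def Phi (n : ℕ) (P f : ℝ[X]) : ℝ :=
  ∑ j ∈ Finset.range (n + 1),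
    (j.factorial : ℝ) * ((n - j).factorial : ℝ) * f.coeff j * P.coeff (n - j)

lemma Phi_zero (n : ℕ) (P : ℝ[X]) : Phi n P 0 = 0 := by
  simp [Phi]

lemma Phi_sum {ι : Type*} (S : Finset ι) (n : ℕ) (P : ℝ[X]) (f : ι → ℝ[X]) :
    Phi n P (∑ i ∈ S, f i) = ∑ i ∈ S, Phi n P (f i) := by
  unfold Phi
  rw [Finset.sum_comm]
  refine Finset.sum_congr rfl fun j _ => ?_
  rw [finset_sum_coeff]
  simp only [Finset.mul_sum, Finset.sum_mul]

lemma Phi_C_mul (n : ℕ) (P : ℝ[X]) (a : ℝ) (f : ℝ[X]) :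
    Phi n P (Polynomial.C a * f) = a * Phi n P f := by
  unfold Phi
  rw [Finset.mul_sum]
  refine Finset.sum_congr rfl fun j _ => ?_
  rw [coeff_C_mul]; ring

lemma nat_fact_id (n t k : ℕ) (ht : t ≤ n) (hk : k ≤ t) :
    (t - k).factorial * (k + (n - t)).factorial * (t.choose (t - k)) =
      t.factorial * ((n - t).factorial * ((k + (n - t)).choose (n - t))) := by
  have e1 : t.choose (t - k) * (t - k).factorial * (t - (t - k)).factorial = t.factorial :=
    Nat.choose_mul_factorial_mul_factorial (Nat.sub_le t k)
  have e2 : (k + (n - t)).choose (n - t) * (n - t).factorial *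
      ((k + (n - t)) - (n - t)).factorial = (k + (n - t)).factorial :=
    Nat.choose_mul_factorial_mul_factorial (Nat.le_add_left _ _)
  have h1 : t - (t - k) = k := by omega
  have h2 : (k + (n - t)) - (n - t) = k := by omega
  rw [h1] at e1
  rw [h2] at e2
  apply Nat.eq_of_mul_eq_mul_right (Nat.factorial_pos k)
  calc (t - k).factorial * (k + (n - t)).factorial * (t.choose (t - k)) * k.factorial
      = (k + (n - t)).factorial * (t.choose (t - k) * (t - k).factorial * k.factorial) := by ring
    _ = (k + (n - t)).factorial * t.factorial := by rw [e1]
    _ = t.factorial * ((n - t).factorial * ((k + (n - t)).choose (n - t))) * k.factorial := by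
        rw [← e2]; ring

/-- Key identity: pairing a power `(X+λ)^t` against `P` computes a Taylor coefficient of `P`. -/
lemma Phi_pow (n t : ℕ) (ht : t ≤ n) (lam : ℝ) (P : ℝ[X]) (hP : P.natDegree ≤ n) :
    Phi n P ((X + Polynomial.C lam) ^ t)
      = (t.factorial : ℝ) * ((n - t).factorial : ℝ) * (taylor lam P).coeff (n - t) := by
  have hhd : (hasseDeriv (n - t) P).natDegree < t + 1 := by
    have := natDegree_hasseDeriv_le P (n - t)
    omega
  rw [taylor_coeff, eval_eq_sum_range' hhd]
  unfold Phi
  have hsub : Finset.range (t + 1) ⊆ Finset.range (n + 1) := by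
    apply Finset.range_subset_range.2; omega
  have hvanish : ∀ j ∈ Finset.range (n + 1), j ∉ Finset.range (t + 1) →
      (j.factorial : ℝ) * ((n - j).factorial : ℝ) * ((X + Polynomial.C lam) ^ t).coeff j *
        P.coeff (n - j) = 0 := by
    intro j _ hj
    simp only [Finset.mem_range, not_lt] at hj
    rw [coeff_X_add_C_pow, Nat.choose_eq_zero_of_lt (by omega)]
    push_cast; ring
  rw [← Finset.sum_subset hsub hvanish]
  rw [Finset.mul_sum, ← Finset.sum_range_reflect]
  refine Finset.sum_congr rfl fun k hk => ?_
  simp only [Finset.mem_range] at hk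
  have hk' : k ≤ t := by omega
  have h1 : t + 1 - 1 - k = t - k := by omega
  rw [h1, coeff_X_add_C_pow, hasseDeriv_coeff]
  have h2 : t - (t - k) = k := by omega
  have h3 : n - (t - k) = k + (n - t) := by omega
  rw [h2, h3]
  have := nat_fact_id n t k ht hk'
  calc ((t - k).factorial : ℝ) * ((k + (n - t)).factorial : ℝ) *
        (lam ^ k * (t.choose (t - k) : ℝ)) * P.coeff (k + (n - t))
      = (((t - k).factorial * (k + (n - t)).factorial * (t.choose (t - k)) : ℕ) : ℝ) *
          lam ^ k * P.coeff (k + (n - t)) := by push_cast; ring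
    _ = ((t.factorial * ((n - t).factorial * ((k + (n - t)).choose (n - t))) : ℕ) : ℝ) *
          lam ^ k * P.coeff (k + (n - t)) := by rw [this]
    _ = (t.factorial : ℝ) * ((n - t).factorial : ℝ) *
          (((k + (n - t)).choose (n - t) : ℝ) * P.coeff (k + (n - t)) * lam ^ k) := by
        push_cast; ring


lemma taylor_factor_coeff_lt (mu : ℝ) (mm r : ℕ) (S : ℝ[X]) (hr : r < mm) :
    (taylor mu ((X - Polynomial.C mu) ^ mm * S)).coeff r = 0 := by
  rw [taylor_mul]
  have h1 : taylor mu ((X - Polynomial.C mu) ^ mm) = X ^ mm := by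
    simp [taylor_apply, pow_comp, sub_comp]
  rw [h1, mul_comm, coeff_mul_X_pow']
  rw [if_neg (by omega)]

lemma taylor_factor_coeff_eq (mu : ℝ) (mm : ℕ) (S : ℝ[X]) :
    (taylor mu ((X - Polynomial.C mu) ^ mm * S)).coeff mm = S.eval mu := by
  rw [taylor_mul]
  have h1 : taylor mu ((X - Polynomial.C mu) ^ mm) = X ^ mm := by
    simp [taylor_apply, pow_comp, sub_comp]
  rw [h1, mul_comm, coeff_mul_X_pow', if_pos le_rfl, Nat.sub_self, taylor_coeff_zero]

lemma expand_term (mi : ℕ) (lam : ℝ) (sp : ℝ[X]) (e : ℕ)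
    (hdeg : sp ≠ 0 → sp.natDegree < mi) :
    sp * (X + Polynomial.C lam) ^ e =
      ∑ k ∈ Finset.range mi,
        Polynomial.C ((taylor (-lam) sp).coeff k) * (X + Polynomial.C lam) ^ (e + k) := by
  by_cases hsp : sp = 0
  · simp [hsp]
  · have hexp : sp = ∑ k ∈ Finset.range mi,
        Polynomial.C ((taylor (-lam) sp).coeff k) * (X + Polynomial.C lam) ^ k := by
      conv_lhs => rw [← sum_taylor_eq sp (-lam)]
      rw [Polynomial.sum_over_range' _ (fun n => by simp) mi
        (by rw [natDegree_taylor]; exact hdeg hsp)]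
      refine Finset.sum_congr rfl fun k _ => ?_
      rw [map_neg, sub_neg_eq_add]
    conv_lhs => rw [hexp]
    rw [Finset.sum_mul]
    refine Finset.sum_congr rfl fun k _ => ?_
    rw [pow_add]; ring

/-- Linear independence of the confluent family. -/
lemma indep {s : ℕ} (m : Fin s → ℕ) (lam : Fin s → ℝ)
    (hinj : ∀ i j, i ≠ j → lam i ≠ lam j)
    (sp : Fin s → ℝ[X])
    (hdeg : ∀ i, sp i ≠ 0 → (sp i).natDegree < m i)
    (hrel : ∑ i, sp i * (X + Polynomial.C (lam i)) ^ (∑ j, m j - m i) = 0) :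
    ∀ i, sp i = 0 := by
  intro i0
  by_cases hm0 : m i0 = 0
  · by_contra hne
    have := hdeg i0 hne
    omega
  set N := ∑ j, m j with hN
  have hmle : ∀ i, m i ≤ N := fun i =>
    Finset.single_le_sum (fun j _ => Nat.zero_le (m j)) (Finset.mem_univ i)
  have hN1 : 1 ≤ N := le_trans (by omega) (hmle i0)
  set n := N - 1 with hn
  have key : ∀ k, (taylor (-lam i0) (sp i0)).coeff k = 0 := by
    intro k
    induction k using Nat.strong_induction_on with
    | _ k IH =>
      by_cases hsp0 : sp i0 = 0
      · simp [hsp0]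
      by_cases hk : m i0 ≤ k
      · exact coeff_eq_zero_of_natDegree_lt
          (by rw [natDegree_taylor]; exact lt_of_lt_of_le (hdeg i0 hsp0) hk)
      push_neg at hk
      set r0 := m i0 - 1 - k with hr0
      set Q : ℝ[X] := ∏ j ∈ Finset.univ.erase i0, (X - Polynomial.C (lam j)) ^ (m j) with hQ
      set P : ℝ[X] := (X - Polynomial.C (lam i0)) ^ r0 * Q with hP
      have hQdeg : Q.natDegree = ∑ j ∈ Finset.univ.erase i0, m j := by
        rw [hQ, natDegree_prod]
        · exact Finset.sum_congr rfl fun j _ => by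
            rw [natDegree_pow, natDegree_X_sub_C, mul_one]
        · intro j _
          exact pow_ne_zero _ (X_sub_C_ne_zero _)
      have hsumerase : ∑ j ∈ Finset.univ.erase i0, m j + m i0 = N := by
        rw [hN]; exact Finset.sum_erase_add _ _ (Finset.mem_univ i0)
      have hPdeg : P.natDegree ≤ n := by
        rw [hP, natDegree_mul (pow_ne_zero _ (X_sub_C_ne_zero _)) ?_, natDegree_pow,
          natDegree_X_sub_C, hQdeg]
        · omega
        · rw [hQ]
          exact Finset.prod_ne_zero_iff.2 fun j _ => pow_ne_zero _ (X_sub_C_ne_zero _)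
      have h0 : (0 : ℝ) = ∑ i, Phi n P (sp i * (X + Polynomial.C (lam i)) ^ (N - m i)) := by
        rw [← Phi_sum, hrel, Phi_zero]
      have hterm : ∀ i, Phi n P (sp i * (X + Polynomial.C (lam i)) ^ (N - m i)) =
          ∑ k' ∈ Finset.range (m i),
            (taylor (-lam i) (sp i)).coeff k' *
              ((((N - m i) + k').factorial : ℝ) * ((n - ((N - m i) + k')).factorial : ℝ) *
                (taylor (lam i) P).coeff (n - ((N - m i) + k'))) := by
        intro i
        rw [expand_term (m i) (lam i) (sp i) (N - m i) (hdeg i), Phi_sum]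
        refine Finset.sum_congr rfl fun k' hk' => ?_
        simp only [Finset.mem_range] at hk'
        rw [Phi_C_mul, Phi_pow n _ (by have := hmle i; omega) _ P hPdeg]
      have hzero_ne : ∀ i, i ≠ i0 → ∀ k' < m i,
          (taylor (lam i) P).coeff (n - ((N - m i) + k')) = 0 := by
        intro i hi k' hk'
        have hmem : i ∈ Finset.univ.erase i0 := Finset.mem_erase.2 ⟨hi, Finset.mem_univ i⟩
        have hfac : P = (X - Polynomial.C (lam i)) ^ (m i) *
            ((X - Polynomial.C (lam i0)) ^ r0 *
              ∏ j ∈ (Finset.univ.erase i0).erase i, (X - Polynomial.C (lam j)) ^ (m j)) := by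
          rw [hP, hQ, ← Finset.mul_prod_erase _ _ hmem]; ring
        rw [hfac]
        apply taylor_factor_coeff_lt
        have := hmle i
        omega
      have hQeval : Q.eval (lam i0) ≠ 0 := by
        rw [hQ, eval_prod]
        apply Finset.prod_ne_zero_iff.2
        intro j hj
        rw [eval_pow, eval_sub, eval_X, eval_C]
        apply pow_ne_zero
        exact sub_ne_zero.2 (hinj i0 j fun h => (Finset.mem_erase.1 hj).1 h.symm)
      have hcoeff_i0_gt : ∀ k', k < k' → k' < m i0 →
          (taylor (lam i0) P).coeff (n - ((N - m i0) + k')) = 0 := by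
        intro k' hkk' hk'
        rw [hP]
        apply taylor_factor_coeff_lt
        have := hmle i0
        omega
      -- collapse the double sum
      rw [Finset.sum_congr rfl fun i _ => hterm i] at h0
      rw [Finset.sum_eq_single i0 ?hout ?hnotmem] at h0
      case hout =>
        intro i _ hi
        apply Finset.sum_eq_zero
        intro k' hk'
        rw [hzero_ne i hi k' (Finset.mem_range.1 hk')]
        ring
      case hnotmem =>
        intro h
        exact absurd (Finset.mem_univ i0) h
      rw [Finset.sum_eq_single k ?hout2 ?hnm2] at h0
      case hout2 =>
        intro k' hk' hkk
        rcases lt_or_gt_of_ne hkk with hlt | hgt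
        · rw [IH k' hlt]; ring
        · rw [hcoeff_i0_gt k' hgt (Finset.mem_range.1 hk')]; ring
      case hnm2 =>
        intro h
        exact absurd (Finset.mem_range.2 hk) h
      have hidx : n - ((N - m i0) + k) = r0 := by
        have := hmle i0
        omega
      rw [hidx, hP, taylor_factor_coeff_eq] at h0
      have hMne : ((((N - m i0) + k).factorial : ℝ) * ((r0).factorial : ℝ) *
          Q.eval (lam i0)) ≠ 0 := by
        exact mul_ne_zero (mul_ne_zero (Nat.cast_ne_zero.2 (Nat.factorial_ne_zero _))
          (Nat.cast_ne_zero.2 (Nat.factorial_ne_zero _))) hQeval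
      exact (mul_eq_zero.1 h0.symm).resolve_right hMne
  have : taylor (-lam i0) (sp i0) = 0 := by
    ext k; rw [key k, coeff_zero]
  exact taylor_injective (-lam i0)
    (by rw [this, map_zero] : taylor (-lam i0) (sp i0) = taylor (-lam i0) 0)

lemma diter (j e : ℕ) (hje : j ≤ e) (lam : ℝ) (r : ℝ[X]) :
    ∃ sp : ℝ[X], derivative^[j] (r * (X + Polynomial.C lam) ^ e) =
        sp * (X + Polynomial.C lam) ^ (e - j) ∧
      sp.natDegree ≤ r.natDegree ∧ (sp = 0 ↔ r = 0) := by
  induction j with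
  | zero => exact ⟨r, by simp, le_rfl, Iff.rfl⟩
  | succ j IH =>
    obtain ⟨sp, h1, h2, h3⟩ := IH (le_trans (Nat.le_succ j) hje)
    refine ⟨derivative sp * (X + Polynomial.C lam) + Polynomial.C ((e - j : ℕ) : ℝ) * sp,
      ?_, ?_, ?_⟩
    · rw [Function.iterate_succ_apply', h1, derivative_mul, derivative_X_add_C_pow]
      have hpow : (X + Polynomial.C lam) ^ (e - j) =
          (X + Polynomial.C lam) ^ (e - (j + 1)) * (X + Polynomial.C lam) := by
        rw [← pow_succ]
        congr 1
        omega
      have he1 : e - j - 1 = e - (j + 1) := by omega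
      rw [he1, hpow]
      ring
    · by_cases hsp : sp = 0
      · simp [hsp]
      refine le_trans (natDegree_add_le _ _) (max_le (le_trans ?_ h2)
        (le_trans (natDegree_C_mul_le _ _) h2))
      by_cases hd0 : sp.natDegree = 0
      · obtain ⟨a, rfl⟩ := natDegree_eq_zero.1 hd0
        simp
      · refine le_trans (natDegree_mul_le) ?_
        rw [natDegree_X_add_C]
        have := natDegree_derivative_lt hd0
        omega
    · constructor
      · intro hz
        by_contra hr
        have hspne : sp ≠ 0 := fun h => hr (h3.1 h)
        set nd := sp.natDegree with hnd
        have hder_top : (derivative sp).coeff nd = 0 := by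
          rw [coeff_derivative, coeff_eq_zero_of_natDegree_lt (by omega)]
          ring
        have hDX : (derivative sp * X).coeff nd = (nd : ℝ) * sp.coeff nd := by
          rw [← pow_one (X : ℝ[X]), coeff_mul_X_pow']
          rcases Nat.eq_zero_or_pos nd with h0 | h1
          · rw [if_neg (by omega), h0]
            simp
          · rw [if_pos (show 1 ≤ nd by omega), coeff_derivative]
            have : nd - 1 + 1 = nd := by omega
            rw [this]
            push_cast [Nat.cast_sub h1]
            ring
        have hc : (derivative sp * (X + Polynomial.C lam) +
            Polynomial.C ((e - j : ℕ) : ℝ) * sp).coeff nd =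
            ((nd : ℝ) + ((e - j : ℕ) : ℝ)) * sp.coeff nd := by
          rw [mul_add, coeff_add, coeff_add, coeff_mul_C, coeff_C_mul, hDX, hder_top]
          ring
        rw [hz, coeff_zero] at hc
        have hcoef : sp.coeff nd ≠ 0 := by
          rw [hnd]
          exact mt leadingCoeff_eq_zero.1 hspne
        have hfac : ((nd : ℝ) + ((e - j : ℕ) : ℝ)) ≠ 0 := by
          have : 1 ≤ e - j := by omega
          have : (1 : ℝ) ≤ ((e - j : ℕ) : ℝ) := by exact_mod_cast this
          positivity
        exact hcoef (by
          rcases mul_eq_zero.1 hc.symm with h | h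
          · exact absurd h hfac
          · exact h)
      · intro hr
        rw [h3.2 hr]
        simp

lemma pcore {s : ℕ} (m : Fin s → ℕ) (lam : Fin s → ℝ)
    (hinj : ∀ i j, i ≠ j → lam i ≠ lam j) (d : ℕ)
    (hN : ∑ j, m j ≤ d + 1)
    (r : Fin s → ℝ[X]) (hdeg : ∀ i, r i ≠ 0 → (r i).natDegree < m i)
    (hG : ∀ t, d + 1 - ∑ j, m j ≤ t →
      (∑ i, r i * (X + Polynomial.C (lam i)) ^ (d + 1 - m i)).coeff t = 0) :
    ∀ i, r i = 0 := by
  set N := ∑ j, m j with hNdef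
  have hmle : ∀ i, m i ≤ N := fun i =>
    Finset.single_le_sum (fun j _ => Nat.zero_le (m j)) (Finset.mem_univ i)
  set G := ∑ i, r i * (X + Polynomial.C (lam i)) ^ (d + 1 - m i) with hGdef
  have hGz : derivative^[d + 1 - N] G = 0 := by
    by_cases hG0 : G = 0
    · rw [hG0]
      simp
    · apply iterate_derivative_eq_zero
      by_contra hdeg'
      push_neg at hdeg'
      exact leadingCoeff_ne_zero.2 hG0 (hG G.natDegree hdeg')
  choose sp hsp1 hsp2 hsp3 using fun i =>
    diter (d + 1 - N) (d + 1 - m i) (by have := hmle i; omega) (lam i) (r i)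
  have hiter : ∀ (j : ℕ) (f : Fin s → ℝ[X]),
      derivative^[j] (∑ i, f i) = ∑ i, derivative^[j] (f i) := by
    intro j
    induction j with
    | zero => intro f; simp
    | succ j IH =>
      intro f
      rw [Function.iterate_succ_apply', IH, map_sum]
      simp [Function.iterate_succ_apply']
  have hrel : ∑ i, sp i * (X + Polynomial.C (lam i)) ^ (N - m i) = 0 := by
    rw [← hGz, hGdef, hiter]
    refine Finset.sum_congr rfl fun i _ => ?_
    rw [hsp1 i]
    congr 2
    have := hmle i
    omega
  have hz : ∀ i, sp i = 0 := by
    apply indep m lam hinj sp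
    · intro i hi
      have hri : r i ≠ 0 := fun h => hi ((hsp3 i).2 h)
      exact lt_of_le_of_lt (hsp2 i) (hdeg i hri)
    · rw [← hNdef]
      exact hrel
  intro i
  exact (hsp3 i).1 (hz i)

lemma coeff_fin_sum (mi : ℕ) (g : Fin mi → ℝ) (k : Fin mi) :
    (∑ k' : Fin mi, Polynomial.C (g k') * X ^ (k' : ℕ)).coeff (k : ℕ) = g k := by
  rw [finset_sum_coeff]
  rw [Finset.sum_eq_single k]
  · rw [coeff_C_mul, coeff_X_pow, if_pos rfl, mul_one]
  · intro k' _ hk'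
    rw [coeff_C_mul, coeff_X_pow, if_neg (fun h => hk' (Fin.ext h).symm), mul_zero]
  · intro h
    exact absurd (Finset.mem_univ k) h

lemma natDegree_fin_sum_lt {mi : ℕ} (hmi : 1 ≤ mi) (g : Fin mi → ℝ) :
    (∑ k' : Fin mi, Polynomial.C (g k') * X ^ (k' : ℕ)).natDegree ≤ mi - 1 := by
  apply natDegree_sum_le_of_forall_le
  intro k _
  refine le_trans (natDegree_C_mul_le _ _) ?_
  rw [natDegree_X_pow]
  have := k.2
  omega

lemma exist_onevar {s : ℕ} (m : Fin s → ℕ) (lam : Fin s → ℝ)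
    (hinj : ∀ i j, i ≠ j → lam i ≠ lam j) (d B : ℕ) (hBd : B ≤ d)
    (hsum : ∑ j, m j = B + 1) :
    ∃ r : Fin s → ℝ[X],
      (∀ i, (r i).natDegree ≤ m i - 1) ∧ (∀ i, m i = 0 → r i = 0) ∧
      (∀ t, d - B < t → (∑ i, r i * (X + Polynomial.C (lam i)) ^ (d + 1 - m i)).coeff t = 0) ∧
      (∑ i, r i * (X + Polynomial.C (lam i)) ^ (d + 1 - m i)).coeff (d - B) ≠ 0 := by
  classical
  set v : (Σ i : Fin s, Fin (m i)) → ℝ[X] :=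
    fun p => X ^ (p.2 : ℕ) * (X + Polynomial.C (lam p.1)) ^ (d + 1 - m p.1) with hv
  -- grouping a sigma-sum into polynomials
  have hgroup : ∀ g : (Σ i : Fin s, Fin (m i)) → ℝ,
      ∑ p, g p • v p = ∑ i, (∑ k' : Fin (m i), Polynomial.C (g ⟨i, k'⟩) * X ^ (k' : ℕ)) *
        (X + Polynomial.C (lam i)) ^ (d + 1 - m i) := by
    intro g
    rw [← Finset.univ_sigma_univ, Finset.sum_sigma]
    refine Finset.sum_congr rfl fun i _ => ?_
    rw [Finset.sum_mul]
    refine Finset.sum_congr rfl fun k' _ => ?_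
    rw [hv, smul_eq_C_mul]
    ring
  have hpc : ∀ g : (Σ i : Fin s, Fin (m i)) → ℝ,
      (∀ t, d - B ≤ t → (∑ p, g p • v p).coeff t = 0) → ∀ p, g p = 0 := by
    intro g hcz p
    have hr := pcore m lam hinj d (by omega)
      (fun i => ∑ k' : Fin (m i), Polynomial.C (g ⟨i, k'⟩) * X ^ (k' : ℕ))
      (fun i hi => by
        have hmi : 1 ≤ m i := by
          rcases Nat.eq_zero_or_pos (m i) with h0 | h1
          · refine absurd (Finset.sum_eq_zero fun k' _ => ?_) hi
            have := k'.2
            omega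
          · exact h1
        have := natDegree_fin_sum_lt hmi (fun k' => g ⟨i, k'⟩)
        omega)
      (by
        intro t ht
        rw [← hgroup]
        exact hcz t (by omega))
    obtain ⟨i, k⟩ := p
    have h1 := hr i
    have h2 := coeff_fin_sum (m i) (fun k' => g ⟨i, k'⟩) k
    rw [h1] at h2
    simp only [coeff_zero] at h2
    exact h2.symm
  have hli : LinearIndependent ℝ v := by
    rw [Fintype.linearIndependent_iff]
    intro g hg
    apply hpc g
    intro t ht
    rw [hg, coeff_zero]
  -- finite dimensional argument
  have hfdW : FiniteDimensional ℝ
      (Submodule.span ℝ (Set.range v) : Submodule ℝ ℝ[X]) :=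
    FiniteDimensional.span_of_finite ℝ (Set.finite_range v)
  have hfdLT : ∀ n : ℕ, FiniteDimensional ℝ (degreeLT ℝ n : Submodule ℝ ℝ[X]) := fun n =>
    Module.Finite.equiv (degreeLTEquiv ℝ n).symm
  haveI := hfdLT (d + 1)
  haveI := hfdLT (d - B + 1)
  have hfr : ∀ n : ℕ, Module.finrank ℝ (degreeLT ℝ n : Submodule ℝ ℝ[X]) = n := fun n => by
    rw [(degreeLTEquiv ℝ n).finrank_eq, Module.finrank_fin_fun]
  have hWrank : Module.finrank ℝ (Submodule.span ℝ (Set.range v) : Submodule ℝ ℝ[X])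
      = B + 1 := by
    rw [finrank_span_eq_card hli, Fintype.card_sigma]
    simpa using hsum
  have hvmem : ∀ p, v p ∈ degreeLT ℝ (d + 1) := by
    intro p
    rw [mem_degreeLT]
    have hnd : (v p).natDegree ≤ d := by
      refine le_trans (natDegree_mul_le) ?_
      rw [natDegree_X_pow, natDegree_pow_X_add_C]
      have h1 := p.2.2
      have h2 : m p.1 ≤ ∑ j, m j :=
        Finset.single_le_sum (fun j _ => Nat.zero_le (m j)) (Finset.mem_univ p.1)
      omega
    refine lt_of_le_of_lt (degree_le_natDegree) ?_
    exact_mod_cast Nat.lt_succ_of_le hnd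
  have hWle : Submodule.span ℝ (Set.range v) ≤ degreeLT ℝ (d + 1) :=
    Submodule.span_le.2 (Set.range_subset_iff.2 hvmem)
  have hsup : Submodule.span ℝ (Set.range v) ⊔ degreeLT ℝ (d - B + 1) ≤ degreeLT ℝ (d + 1) :=
    sup_le hWle (degreeLT_mono (by omega))
  have hdim := Submodule.finrank_sup_add_finrank_inf_eq
    (Submodule.span ℝ (Set.range v)) (degreeLT ℝ (d - B + 1))
  have hsuprank : Module.finrank ℝ
      ↥(Submodule.span ℝ (Set.range v) ⊔ degreeLT ℝ (d - B + 1)) ≤ d + 1 := by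
    have := Submodule.finrank_mono hsup
    rwa [hfr (d + 1)] at this
  have hint : 1 ≤ Module.finrank ℝ
      ↥(Submodule.span ℝ (Set.range v) ⊓ degreeLT ℝ (d - B + 1)) := by
    rw [hWrank, hfr] at hdim
    omega
  have hnebot : (Submodule.span ℝ (Set.range v) ⊓ degreeLT ℝ (d - B + 1)) ≠ ⊥ := by
    intro hbot
    rw [hbot, finrank_bot] at hint
    omega
  obtain ⟨G, hGmem, hGne⟩ := (Submodule.ne_bot_iff _).1 hnebot
  obtain ⟨hGW, hGlt⟩ := Submodule.mem_inf.1 hGmem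
  obtain ⟨g, hg⟩ := (Submodule.mem_span_range_iff_exists_fun ℝ).1 hGW
  have hGr : ∑ i, (∑ k' : Fin (m i), Polynomial.C (g ⟨i, k'⟩) * X ^ (k' : ℕ)) *
      (X + Polynomial.C (lam i)) ^ (d + 1 - m i) = G := by
    rw [← hgroup g, hg]
  have hcoefflt : ∀ t, d - B < t → G.coeff t = 0 := by
    intro t ht
    apply coeff_eq_zero_of_degree_lt
    refine lt_of_lt_of_le (mem_degreeLT.1 hGlt) ?_
    exact_mod_cast Nat.succ_le_of_lt ht
  have hrd : ∀ i, (∑ k' : Fin (m i), Polynomial.C (g ⟨i, k'⟩) * X ^ (k' : ℕ)) ≠ 0 →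
      (∑ k' : Fin (m i), Polynomial.C (g ⟨i, k'⟩) * X ^ (k' : ℕ)).natDegree < m i := by
    intro i hi
    have hmi : 1 ≤ m i := by
      rcases Nat.eq_zero_or_pos (m i) with h0 | h1
      · refine absurd (Finset.sum_eq_zero fun k' _ => ?_) hi
        exact absurd k'.2 (by omega)
      · exact h1
    have := natDegree_fin_sum_lt hmi (fun k' => g ⟨i, k'⟩)
    omega
  have hcoeffD : G.coeff (d - B) ≠ 0 := by
    intro h0
    apply hGne
    have hz := pcore m lam hinj d (by omega)
      (fun i => ∑ k' : Fin (m i), Polynomial.C (g ⟨i, k'⟩) * X ^ (k' : ℕ))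
      (fun i hi => hrd i hi)
      (by
        intro t ht
        rw [hsum] at ht
        rw [hGr]
        rcases Nat.lt_or_ge (d - B) t with h | h
        · exact hcoefflt t h
        · have : t = d - B := by omega
          rw [this]
          exact h0)
    rw [← hGr]
    refine Finset.sum_eq_zero fun i _ => ?_
    have := hz i
    rw [this, zero_mul]
  refine ⟨fun i => ∑ k' : Fin (m i), Polynomial.C (g ⟨i, k'⟩) * X ^ (k' : ℕ),
    ?_, ?_, ?_, ?_⟩
  · intro i
    dsimp only
    rcases Nat.eq_zero_or_pos (m i) with h0 | h1
    · have : (∑ k' : Fin (m i), Polynomial.C (g ⟨i, k'⟩) * X ^ (k' : ℕ)) = 0 :=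
        Finset.sum_eq_zero fun k' _ => absurd k'.2 (by omega)
      rw [this, natDegree_zero]
      omega
    · exact natDegree_fin_sum_lt h1 (fun k' => g ⟨i, k'⟩)
  · intro i h0
    dsimp only
    exact Finset.sum_eq_zero fun k' _ => absurd k'.2 (by omega)
  · intro t ht
    dsimp only
    rw [hGr]
    exact hcoefflt t ht
  · dsimp only
    rw [hGr]
    exact hcoeffD

end LexSegAux

open MvPolynomial

/-- The exponent vector of the monomial `x^A y^B` in `ℝ[x,y] = MvPolynomial (Fin 2) ℝ`,
with `x = X 0 > y = X 1`. -/
noncomputable def expVec (A B : ℕ) : Fin 2 →₀ ℕ := Finsupp.single 0 A + Finsupp.single 1 B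

namespace LexSegAux

open Polynomial
open MvPolynomial

lemma expVec_apply_zero (A B : ℕ) : expVec A B 0 = A := by
  simp [expVec, Finsupp.single_apply]

lemma expVec_apply_one (A B : ℕ) : expVec A B 1 = B := by
  simp [expVec, Finsupp.single_apply]

lemma deg2 (v : Fin 2 →₀ ℕ) : v.degree = v 0 + v 1 := by
  calc v.degree = ∑ i ∈ Finset.univ, v i :=
        Finset.sum_subset (Finset.subset_univ _)
          (fun i _ hi => Finsupp.notMem_support_iff.1 hi)
    _ = v 0 + v 1 := Fin.sum_univ_two v

lemma deg_add (u w : Fin 2 →₀ ℕ) : (u + w).degree = u.degree + w.degree := by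
  rw [deg2, deg2, deg2, Finsupp.add_apply, Finsupp.add_apply]
  ring

lemma degree_expVec (A B : ℕ) : (expVec A B).degree = A + B := by
  rw [deg2, expVec_apply_zero, expVec_apply_one]

lemma eq_expVec (v : Fin 2 →₀ ℕ) : v = expVec (v 0) (v 1) := by
  ext i
  fin_cases i
  · exact (expVec_apply_zero _ _).symm
  · exact (expVec_apply_one _ _).symm

noncomputable def theta : MvPolynomial (Fin 2) ℝ →ₐ[ℝ] ℝ[X] :=
  MvPolynomial.aeval ![Polynomial.X, 1]

lemma theta_monomial (v : Fin 2 →₀ ℕ) (r : ℝ) :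
    theta (MvPolynomial.monomial v r) = Polynomial.C r * Polynomial.X ^ (v 0) := by
  rw [theta, MvPolynomial.aeval_monomial,
    Finsupp.prod_fintype _ _ (fun i => pow_zero _), Fin.prod_univ_two]
  simp [Polynomial.algebraMap_eq]

lemma theta_coeff {f : MvPolynomial (Fin 2) ℝ} {n : ℕ} (hf : f.IsHomogeneous n) (t : ℕ) :
    (theta f).coeff t = if t ≤ n then MvPolynomial.coeff (expVec t (n - t)) f else 0 := by
  conv_lhs => rw [f.as_sum]
  rw [map_sum, finset_sum_coeff]
  have hterm : ∀ v ∈ f.support,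
      (theta (MvPolynomial.monomial v (MvPolynomial.coeff v f))).coeff t
        = if t = v 0 then MvPolynomial.coeff v f else 0 := by
    intro v _
    rw [theta_monomial, Polynomial.coeff_C_mul, Polynomial.coeff_X_pow]
    split_ifs with h1
    · rw [mul_one]
    · rw [mul_zero]
  rw [Finset.sum_congr rfl hterm]
  by_cases ht : t ≤ n
  · rw [if_pos ht]
    rw [Finset.sum_eq_single (expVec t (n - t))]
    · rw [if_pos (expVec_apply_zero _ _).symm]
    · intro v hv hne
      rw [if_neg]
      intro h
      apply hne
      have hd : v.degree = n := by
        by_contra hd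
        exact (MvPolynomial.mem_support_iff.1 hv) (hf.coeff_eq_zero hd)
      rw [deg2] at hd
      have hv1 : v 1 = n - t := by omega
      rw [eq_expVec v, ← h, hv1]
    · intro hnot
      rw [if_pos (expVec_apply_zero _ _).symm]
      exact MvPolynomial.notMem_support_iff.1 hnot
  · rw [if_neg ht]
    apply Finset.sum_eq_zero
    intro v hv
    rw [if_neg]
    intro h
    have hd : v.degree = n := by
      by_contra hd
      exact (MvPolynomial.mem_support_iff.1 hv) (hf.coeff_eq_zero hd)
    rw [deg2] at hd
    omega

lemma theta_natDegree {f : MvPolynomial (Fin 2) ℝ} {n : ℕ} (hf : f.IsHomogeneous n) :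
    (theta f).natDegree ≤ n :=
  natDegree_le_iff_coeff_eq_zero.2 fun t ht => by
    rw [theta_coeff hf, if_neg (by omega)]

lemma coeff_mul_homog_high {h g : MvPolynomial (Fin 2) ℝ} {e n : ℕ} (hg : g.IsHomogeneous e)
    (hn : n < e) (v : Fin 2 →₀ ℕ) (hv : v.degree = n) :
    MvPolynomial.coeff v (h * g) = 0 := by
  classical
  rw [MvPolynomial.coeff_mul]
  apply Finset.sum_eq_zero
  rintro ⟨u, w⟩ hm
  rw [Finset.HasAntidiagonal.mem_antidiagonal] at hm
  by_cases hw : MvPolynomial.coeff w g = 0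
  · rw [hw, mul_zero]
  · exfalso
    have hdw : w.degree = e := by
      by_contra hd; exact hw (hg.coeff_eq_zero hd)
    have hadd : u.degree + w.degree = v.degree := by
      rw [← deg_add, hm]
    omega

lemma coeff_mul_homog_comp {h g : MvPolynomial (Fin 2) ℝ} {e n : ℕ} (hg : g.IsHomogeneous e)
    (he : e ≤ n) (v : Fin 2 →₀ ℕ) (hv : v.degree = n) :
    MvPolynomial.coeff v (h * g) =
      MvPolynomial.coeff v ((homogeneousComponent (n - e) h) * g) := by
  classical
  rw [MvPolynomial.coeff_mul, MvPolynomial.coeff_mul]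
  apply Finset.sum_congr rfl
  rintro ⟨u, w⟩ hm
  rw [Finset.HasAntidiagonal.mem_antidiagonal] at hm
  by_cases hw : MvPolynomial.coeff w g = 0
  · rw [hw, mul_zero, mul_zero]
  · have hdw : w.degree = e := by
      by_contra hd; exact hw (hg.coeff_eq_zero hd)
    have hadd : u.degree + w.degree = v.degree := by
      rw [← deg_add, hm]
    have hdu : u.degree = n - e := by omega
    rw [MvPolynomial.coeff_homogeneousComponent, if_pos hdu]

noncomputable def lift2 (n : ℕ) (r : ℝ[X]) : MvPolynomial (Fin 2) ℝ :=
  ∑ k ∈ Finset.range (n + 1), MvPolynomial.monomial (expVec k (n - k)) (r.coeff k)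

lemma lift2_isHomogeneous (n : ℕ) (r : ℝ[X]) : (lift2 n r).IsHomogeneous n := by
  rw [← MvPolynomial.mem_homogeneousSubmodule]
  apply Submodule.sum_mem
  intro k hk
  rw [MvPolynomial.mem_homogeneousSubmodule]
  apply MvPolynomial.isHomogeneous_monomial
  rw [degree_expVec]
  have := Finset.mem_range.1 hk
  omega

lemma theta_lift2 {n : ℕ} {r : ℝ[X]} (hr : r.natDegree ≤ n) : theta (lift2 n r) = r := by
  rw [lift2, map_sum]
  have hterm : ∀ k ∈ Finset.range (n + 1),
      theta (MvPolynomial.monomial (expVec k (n - k)) (r.coeff k)) =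
        Polynomial.monomial k (r.coeff k) := by
    intro k _
    rw [theta_monomial, expVec_apply_zero, Polynomial.C_mul_X_pow_eq_monomial]
  rw [Finset.sum_congr rfl hterm]
  exact (Polynomial.as_sum_range' r (n + 1) (by omega)).symm

lemma exists_sub_sum {s : ℕ} (m : Fin s → ℕ) (M : ℕ) (hM : M ≤ ∑ j, m j) :
    ∃ m' : Fin s → ℕ, (∀ i, m' i ≤ m i) ∧ ∑ j, m' j = M := by
  induction M with
  | zero => exact ⟨fun _ => 0, fun i => Nat.zero_le _, by simp⟩
  | succ M IH =>
    obtain ⟨m', hle, hs⟩ := IH (by omega)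
    have hlt : ∃ i, m' i < m i := by
      by_contra hno
      push_neg at hno
      have : ∑ j, m j ≤ ∑ j, m' j := Finset.sum_le_sum (fun j _ => hno j)
      omega
    obtain ⟨i, hi⟩ := hlt
    refine ⟨Function.update m' i (m' i + 1), ?_, ?_⟩
    · intro j
      rcases eq_or_ne j i with rfl | hne
      · rw [Function.update_self]
        omega
      · rw [Function.update_of_ne hne]
        exact hle j
    · rw [Finset.sum_update_of_mem (Finset.mem_univ i), Finset.sdiff_singleton_eq_erase]
      have h2 : ∑ j ∈ Finset.univ.erase i, m' j + m' i = ∑ j, m' j :=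
        Finset.sum_erase_add _ _ (Finset.mem_univ i)
      omega

end LexSegAux

open LexSegAux

/-- Corollary `LexSeg1D`: the initial ideal of the power ideal
`J = ⟨(bᵢx + cᵢy)^{aᵢ+1}⟩` of distinct points with nonvanishing `x`-coordinates, with
respect to graded lex order (`x > y`), is a lex-segment ideal: in each degree `d` its
monomials are exactly the `min(d+1, Σᵢ[d-aᵢ]₊)` lex-largest monomials of degree `d`.
A monomial `x^{d-B} y^B` lies in the initial ideal in degree `d` iff it is the lex-leading
monomial of some homogeneous `f ∈ J` of degree `d`; for homogeneous `f` of degree `d`,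
this means `coeff (d-B, B) f ≠ 0` and `coeff (d-B', B') f = 0` for all `B' < B`. -/
theorem power_ideal_initial_lex_segment (s : ℕ) (b c : Fin s → ℝ)
    (hb : ∀ i, b i ≠ 0)
    (hdist : ∀ i j, i ≠ j → b i * c j ≠ b j * c i)
    (a : Fin s → ℕ) (hmono : Monotone a) (d B : ℕ) (hBd : B ≤ d) :
    (∃ f ∈ Ideal.span {f : MvPolynomial (Fin 2) ℝ |
          ∃ i, f = (C (b i) * X 0 + C (c i) * X 1) ^ (a i + 1)},
        f.IsHomogeneous d ∧ coeff (expVec (d - B) B) f ≠ 0 ∧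
          ∀ B' < B, coeff (expVec (d - B') B') f = 0) ↔
      B < min (d + 1) (∑ i, (d - a i)) := by
  classical
  obtain ⟨lam, hlam⟩ : ∃ lam : Fin s → ℝ, ∀ i, lam i = c i / b i := ⟨_, fun _ => rfl⟩
  have hinj : ∀ i j, i ≠ j → lam i ≠ lam j := by
    intro i j hij h
    rw [hlam, hlam, div_eq_div_iff (hb i) (hb j)] at h
    exact hdist j i (fun hh => hij hh.symm) (by linarith)
  obtain ⟨gen, hgen⟩ : ∃ gen : Fin s → MvPolynomial (Fin 2) ℝ,
      ∀ i, gen i = (C (b i) * X 0 + C (c i) * X 1) ^ (a i + 1) := ⟨_, fun _ => rfl⟩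
  have hset : {f : MvPolynomial (Fin 2) ℝ |
      ∃ i, f = (C (b i) * X 0 + C (c i) * X 1) ^ (a i + 1)} = Set.range gen := by
    ext f
    constructor
    · rintro ⟨i, rfl⟩
      exact ⟨i, hgen i⟩
    · rintro ⟨i, rfl⟩
      exact ⟨i, hgen i⟩
  have hlinhom : ∀ i, (C (b i) * X 0 + C (c i) * X 1 :
      MvPolynomial (Fin 2) ℝ).IsHomogeneous 1 :=
    fun i => (isHomogeneous_C_mul_X (b i) 0).add (isHomogeneous_C_mul_X (c i) 1)
  have hgenhom : ∀ i, (gen i).IsHomogeneous (a i + 1) := by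
    intro i
    rw [hgen i]
    simpa only [one_mul] using (hlinhom i).pow (a i + 1)
  have htlin : ∀ i, theta (C (b i) * X 0 + C (c i) * X 1) =
      Polynomial.C (b i) * (Polynomial.X + Polynomial.C (lam i)) := by
    intro i
    rw [map_add, map_mul, map_mul]
    have h0 : theta (X 0 : MvPolynomial (Fin 2) ℝ) = Polynomial.X := by
      simp [theta]
    have h1 : theta (X 1 : MvPolynomial (Fin 2) ℝ) = 1 := by
      simp [theta]
    have hC : ∀ x : ℝ, theta (C x) = Polynomial.C x := by
      intro x
      simp [theta, Polynomial.algebraMap_eq]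
    rw [h0, h1, hC, hC, mul_one, mul_add, ← Polynomial.C_mul, hlam,
      mul_comm (b i) (c i / b i), div_mul_cancel₀ (c i) (hb i)]
  have htgen : ∀ i, theta (gen i) =
      Polynomial.C (b i ^ (a i + 1)) *
        (Polynomial.X + Polynomial.C (lam i)) ^ (a i + 1) := by
    intro i
    rw [hgen i, map_pow, htlin i, mul_pow, ← Polynomial.C_pow]
  constructor
  · rintro ⟨f, hfspan, hfhom, hfB, hfB'⟩
    rw [lt_min_iff]
    refine ⟨by omega, ?_⟩
    by_contra hnot
    push_neg at hnot
    rw [hset] at hfspan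
    obtain ⟨h, hsum⟩ := (Submodule.mem_span_range_iff_exists_fun _).1 hfspan
    obtain ⟨hcomp, hcompdef⟩ : ∃ hc : Fin s → MvPolynomial (Fin 2) ℝ,
        ∀ i, hc i = if a i + 1 ≤ d then
          homogeneousComponent (d - (a i + 1)) (h i) else 0 := ⟨_, fun _ => rfl⟩
    obtain ⟨f', hf'def⟩ : ∃ f' : MvPolynomial (Fin 2) ℝ,
        f' = ∑ i, hcomp i * gen i := ⟨_, rfl⟩
    have hcoeq : ∀ v : Fin 2 →₀ ℕ, v.degree = d →
        MvPolynomial.coeff v f = MvPolynomial.coeff v f' := by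
      intro v hv
      rw [← hsum, hf'def, MvPolynomial.coeff_sum, MvPolynomial.coeff_sum]
      refine Finset.sum_congr rfl fun i _ => ?_
      rw [smul_eq_mul]
      by_cases hcase : a i + 1 ≤ d
      · rw [hcompdef i, if_pos hcase]
        exact coeff_mul_homog_comp (hgenhom i) hcase v hv
      · rw [hcompdef i, if_neg hcase, zero_mul, MvPolynomial.coeff_zero]
        exact coeff_mul_homog_high (hgenhom i) (by omega) v hv
    have hf'hom : f'.IsHomogeneous d := by
      rw [hf'def, ← MvPolynomial.mem_homogeneousSubmodule]
      apply Submodule.sum_mem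
      intro i _
      rw [MvPolynomial.mem_homogeneousSubmodule]
      by_cases hcase : a i + 1 ≤ d
      · rw [hcompdef i, if_pos hcase]
        have hhm := (homogeneousComponent_isHomogeneous (d - (a i + 1)) (h i)).mul (hgenhom i)
        convert hhm using 2
        omega
      · rw [hcompdef i, if_neg hcase, zero_mul]
        exact isHomogeneous_zero _ _ _
    obtain ⟨r, hrdef⟩ : ∃ r : Fin s → Polynomial ℝ,
        ∀ i, r i = (b i ^ (a i + 1)) • theta (hcomp i) := ⟨_, fun _ => rfl⟩
    have hGeq : theta f' = ∑ i, r i *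
        (Polynomial.X + Polynomial.C (lam i)) ^ (d + 1 - (d - a i)) := by
      rw [hf'def, map_sum]
      refine Finset.sum_congr rfl fun i _ => ?_
      rw [map_mul]
      by_cases hcase : a i + 1 ≤ d
      · rw [show d + 1 - (d - a i) = a i + 1 by omega, htgen i, hrdef i,
          Polynomial.smul_eq_C_mul]
        ring
      · rw [hcompdef i, if_neg hcase, map_zero, zero_mul, hrdef i, hcompdef i,
          if_neg hcase, map_zero, smul_zero, zero_mul]
    have hdeg : ∀ i, r i ≠ 0 → (r i).natDegree < d - a i := by
      intro i hri
      have hci : a i + 1 ≤ d := by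
        by_contra hc
        rw [hrdef i, hcompdef i, if_neg hc, map_zero, smul_zero] at hri
        exact hri rfl
      have hh : (hcomp i).IsHomogeneous (d - (a i + 1)) := by
        rw [hcompdef i, if_pos hci]
        exact homogeneousComponent_isHomogeneous _ _
      calc (r i).natDegree ≤ (theta (hcomp i)).natDegree := by
            rw [hrdef i]; exact Polynomial.natDegree_smul_le _ _
        _ ≤ d - (a i + 1) := theta_natDegree hh
        _ < d - a i := by omega
    have hGcond : ∀ t, d + 1 - (∑ j, (d - a j)) ≤ t →
        (∑ i, r i * (Polynomial.X + Polynomial.C (lam i)) ^ (d + 1 - (d - a i))).coeff t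
          = 0 := by
      intro t ht
      rw [← hGeq, theta_coeff hf'hom]
      by_cases htd : t ≤ d
      · rw [if_pos htd, ← hcoeq _ (by rw [degree_expVec]; omega)]
        have hB' : d - t < B := by
          have hq : (∑ j, (fun i => d - a i) j) = ∑ i, (d - a i) := rfl
          omega
        have hzz := hfB' (d - t) hB'
        rw [show d - (d - t) = t by omega] at hzz
        exact hzz
      · rw [if_neg htd]
    have hrz := pcore (fun i => d - a i) lam hinj d
      (by
        have hq : (∑ j, (fun i => d - a i) j) = ∑ i, (d - a i) := rfl
        omega) r hdeg hGcond
    have hG0 : theta f' = 0 := by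
      rw [hGeq]
      refine Finset.sum_eq_zero fun i _ => ?_
      rw [hrz i, zero_mul]
    apply hfB
    rw [hcoeq (expVec (d - B) B) (by rw [degree_expVec]; omega)]
    have h1 : (theta f').coeff (d - B) = MvPolynomial.coeff (expVec (d - B) B) f' := by
      rw [theta_coeff hf'hom, if_pos (by omega), show d - (d - B) = B by omega]
    rw [hG0, Polynomial.coeff_zero] at h1
    exact h1.symm
  · intro hB
    rw [lt_min_iff] at hB
    obtain ⟨hB1, hB2⟩ := hB
    obtain ⟨m', hm'le, hm'sum⟩ := exists_sub_sum (fun i => d - a i) (B + 1)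
      (by
        have hq : (∑ j, (fun i => d - a i) j) = ∑ i, (d - a i) := rfl
        omega)
    obtain ⟨r, hrdeg, hrzero, hcoefflt, hcoeffD⟩ := exist_onevar m' lam hinj d B hBd hm'sum
    obtain ⟨f, hfdef⟩ : ∃ f : MvPolynomial (Fin 2) ℝ, f = ∑ i,
        (lift2 (m' i - 1) ((b i ^ (d + 1 - m' i))⁻¹ • r i) *
          (C (b i) * X 0 + C (c i) * X 1) ^ (d - m' i - a i)) * gen i := ⟨_, rfl⟩
    have hmd : ∀ i, m' i ≠ 0 → a i + m' i ≤ d := by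
      intro i h0
      have := hm'le i
      omega
    have hfhom : f.IsHomogeneous d := by
      rw [hfdef, ← MvPolynomial.mem_homogeneousSubmodule]
      apply Submodule.sum_mem
      intro i _
      rw [MvPolynomial.mem_homogeneousSubmodule]
      by_cases h0 : m' i = 0
      · rw [hrzero i h0, smul_zero]
        have hl0 : lift2 (m' i - 1) 0 = 0 := by
          simp [lift2]
        rw [hl0, zero_mul, zero_mul]
        exact isHomogeneous_zero _ _ _
      · have hhm := ((lift2_isHomogeneous (m' i - 1)
            ((b i ^ (d + 1 - m' i))⁻¹ • r i)).mul
          (by simpa only [one_mul] using (hlinhom i).pow (d - m' i - a i))).mul (hgenhom i)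
        have := hmd i h0
        convert hhm using 2
        omega
    have htf : theta f = ∑ i, r i *
        (Polynomial.X + Polynomial.C (lam i)) ^ (d + 1 - m' i) := by
      rw [hfdef, map_sum]
      refine Finset.sum_congr rfl fun i _ => ?_
      by_cases h0 : m' i = 0
      · rw [hrzero i h0, smul_zero, zero_mul]
        have hl0 : lift2 (m' i - 1) 0 = 0 := by simp [lift2]
        rw [hl0, zero_mul, zero_mul, map_zero]
      · rw [map_mul, map_mul, map_pow, htlin i, htgen i,
          theta_lift2 (le_trans (Polynomial.natDegree_smul_le _ _) (hrdeg i)),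
          Polynomial.smul_eq_C_mul, mul_pow, ← Polynomial.C_pow]
        have hsc : Polynomial.C ((b i ^ (d + 1 - m' i))⁻¹) *
            (Polynomial.C (b i ^ (d - m' i - a i)) * Polynomial.C (b i ^ (a i + 1))) =
              1 := by
          rw [← Polynomial.C_mul, ← Polynomial.C_mul, ← pow_add,
            show d - m' i - a i + (a i + 1) = d + 1 - m' i by
              have := hmd i h0; omega,
            inv_mul_cancel₀ (pow_ne_zero _ (hb i)), Polynomial.C_1]
        have hexp : (Polynomial.X + Polynomial.C (lam i)) ^ (d - m' i - a i) *
            (Polynomial.X + Polynomial.C (lam i)) ^ (a i + 1) =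
              (Polynomial.X + Polynomial.C (lam i)) ^ (d + 1 - m' i) := by
          rw [← pow_add]
          congr 1
          have := hmd i h0
          omega
        calc Polynomial.C ((b i ^ (d + 1 - m' i))⁻¹) * r i *
              (Polynomial.C (b i ^ (d - m' i - a i)) *
                (Polynomial.X + Polynomial.C (lam i)) ^ (d - m' i - a i)) *
              (Polynomial.C (b i ^ (a i + 1)) *
                (Polynomial.X + Polynomial.C (lam i)) ^ (a i + 1))
            = (Polynomial.C ((b i ^ (d + 1 - m' i))⁻¹) *
                (Polynomial.C (b i ^ (d - m' i - a i)) * Polynomial.C (b i ^ (a i + 1)))) *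
              (r i * ((Polynomial.X + Polynomial.C (lam i)) ^ (d - m' i - a i) *
                (Polynomial.X + Polynomial.C (lam i)) ^ (a i + 1))) := by ring
          _ = r i * (Polynomial.X + Polynomial.C (lam i)) ^ (d + 1 - m' i) := by
              rw [hsc, hexp, one_mul]
    have hco : ∀ B' ≤ d, MvPolynomial.coeff (expVec (d - B') B') f =
        (theta f).coeff (d - B') := by
      intro B' hB'
      rw [theta_coeff hfhom, if_pos (by omega), show d - (d - B') = B' by omega]
    refine ⟨f, ?_, hfhom, ?_, ?_⟩
    · rw [hset, hfdef]
      apply Ideal.sum_mem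
      intro i _
      exact Ideal.mul_mem_left _ _ (Ideal.subset_span ⟨i, rfl⟩)
    · rw [hco B hBd, htf]
      exact hcoeffD
    · intro B' hB'
      rw [hco B' (by omega), htf]
      exact hcoefflt (d - B') (by omega)
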